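/- arXiv:1701.00637 — 2 statements merged into one kernel-verified Lean document; each statement's English description precedes it below -/
import Mathlib

section
/- For every lambda term M, the size of its Takahashi translation satisfies |M*| ≤ 2^(|M|−1). -/
inductive Lam : Type
  | var : ℕ → Lam
  | lam : Lam → Lam
  | app : Lam → Lam → Lam
  deriving DecidableEq

namespace Lam

/-- term size -/
def size : Lam → ℕ
  | var _ => 1
  | lam M => 1 + M.size
  | app M N => 1 + M.size + N.size

/-- lift (shift) free variables ≥ d by 1 -/
def lift (d : ℕ) : Lam → Lam
  | var n => if n < d then var n else var (n+1)
  | lam M => lam (M.lift (d+1))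
  | app M N => app (M.lift d) (N.lift d)

/-- capture-avoiding substitution of N for the free variable x (de Bruijn) -/
def subst : Lam → ℕ → Lam → Lam
  | var n, x, N => if n = x then N else if x < n then var (n-1) else var n
  | lam M, x, N => lam (M.subst (x+1) (N.lift 0))
  | app M P, x, N => app (M.subst x N) (P.subst x N)

/-- number of free occurrences of the variable x -/
def count : Lam → ℕ → ℕ
  | var n, x => if n = x then 1 else 0
  | lam M, x => M.count (x+1)
  | app M N, x => M.count x + N.count x

/-- one-step β-reduction -/
inductive Step : Lam → Lam → Prop
  | beta (M N : Lam) : Step (app (lam M) N) (M.subst 0 N)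
  | appL {M M' : Lam} (N : Lam) : Step M M' → Step (app M N) (app M' N)
  | appR (M : Lam) {N N' : Lam} : Step N N' → Step (app M N) (app M N')
  | abs {M M' : Lam} : Step M M' → Step (lam M) (lam M')

/-- many-step β-reduction (reflexive-transitive closure) -/
def Red : Lam → Lam → Prop := Relation.ReflTransGen Step

/-- n-step β-reduction -/
def Steps : ℕ → Lam → Lam → Prop
  | 0, M, N => M = N
  | n+1, M, N => ∃ P, Step M P ∧ Steps n P N

/-- Takahashi translation (Gross-Knuth complete development) -/
def star : Lam → Lam
  | var n => var n
  | lam M => lam (star M)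
  | app (lam M) N => (star M).subst 0 (star N)
  | app (var n) N => app (var n) (star N)
  | app (app M₁ M₂) N => app (star (app M₁ M₂)) (star N)

/-- iterated Takahashi translation M^(n*) -/
def iterStar (n : ℕ) (M : Lam) : Lam := star^[n] M

theorem size_pos (M : Lam) : 1 ≤ M.size := by
  cases M <;> (simp [size]; try omega)

theorem size_lift (d : ℕ) (M : Lam) : (M.lift d).size = M.size := by
  induction M generalizing d with
  | var n => simp only [lift]; split <;> simp [size]
  | lam M ih => simp [lift, size, ih]
  | app M N ihM ihN => simp [lift, size, ihM, ihN]

theorem size_subst (M : Lam) (x : ℕ) (N : Lam) :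
    (M.subst x N).size ≤ M.size * N.size := by
  induction M generalizing x N with
  | var n =>
    simp only [subst, size]
    split
    · simp
    · split <;> (simp [size]; exact size_pos N)
  | lam M ih =>
    have := ih (x+1) (N.lift 0)
    simp only [subst, size, size_lift] at *
    have hN := size_pos N
    nlinarith
  | app M P ihM ihP =>
    have h1 := ihM x N
    have h2 := ihP x N
    simp only [subst, size]
    have hN := size_pos N
    nlinarith

theorem star_app_nonabs (M N : Lam) (h : ∀ Q : Lam, M ≠ Lam.lam Q) :
    (M.app N).star = Lam.app M.star N.star := by
  cases M with
  | var n => simp [star]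
  | lam Q => exact absurd rfl (h Q)
  | app A B => simp [star]

end Lam

/-- |M*| ≤ 2^(|M|−1) -/
theorem size_star (M : Lam) : M.star.size ≤ 2 ^ (M.size - 1) := by
  induction M with
  | var n => simp [Lam.star, Lam.size]
  | lam M ih =>
    simp only [Lam.star, Lam.size]
    have h := Lam.size_pos M
    calc 1 + M.star.size ≤ 1 + 2 ^ (M.size - 1) := by omega
      _ ≤ 2 ^ (M.size - 1) + 2 ^ (M.size - 1) := by
          have : (1:ℕ) ≤ 2 ^ (M.size - 1) := Nat.one_le_two_pow
          omega
      _ = 2 ^ (M.size - 1 + 1) := by ring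
      _ = 2 ^ (1 + M.size - 1) := by congr 1; omega
  | app M N ihM ihN =>
    have hM := Lam.size_pos M
    have hN := Lam.size_pos N
    have hA : (1:ℕ) ≤ 2 ^ (M.size - 1) := Nat.one_le_two_pow
    have hB : (1:ℕ) ≤ 2 ^ (N.size - 1) := Nat.one_le_two_pow
    by_cases habs : ∃ P, M = Lam.lam P
    · obtain ⟨P, rfl⟩ := habs
      simp only [Lam.star, Lam.size] at *
      have ihM' : P.star.size ≤ 2 ^ (1 + P.size - 1) := by omega
      calc (P.star.subst 0 N.star).size
          ≤ P.star.size * N.star.size := Lam.size_subst _ _ _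
        _ ≤ 2 ^ (1 + P.size - 1) * 2 ^ (N.size - 1) := Nat.mul_le_mul ihM' ihN
        _ = 2 ^ (1 + P.size - 1 + (N.size - 1)) := (pow_add 2 _ _).symm
        _ ≤ 2 ^ (1 + (1 + P.size) + N.size - 1) :=
            Nat.pow_le_pow_right (by norm_num) (by have := Lam.size_pos P; omega)
    · push_neg at habs
      rw [Lam.star_app_nonabs M N (fun Q => habs Q)]
      simp only [Lam.size]
      have h1 : M.star.size ≤ 2 ^ (M.size - 1) * 2 ^ (N.size - 1) :=
        le_trans ihM (Nat.le_mul_of_pos_right _ (by omega))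
      have h2 : N.star.size ≤ 2 ^ (M.size - 1) * 2 ^ (N.size - 1) :=
        le_trans ihN (Nat.le_mul_of_pos_left _ (by omega))
      have h0 : (1:ℕ) ≤ 2 ^ (M.size - 1) * 2 ^ (N.size - 1) := by nlinarith
      calc 1 + M.star.size + N.star.size
          ≤ 2 ^ 2 * (2 ^ (M.size - 1) * 2 ^ (N.size - 1)) := by omega
        _ = 2 ^ (2 + (M.size - 1) + (N.size - 1)) := by rw [pow_add, pow_add]; ring
        _ ≤ 2 ^ (1 + M.size + N.size - 1) := Nat.pow_le_pow_right (by norm_num) (by omega)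
end

section
/- (Weak cofinal property) If M β-reduces to N in one step, then N β-reduces to M*, and moreover the reduction N →^l M* can be done with l ≤ (1/2)|N| − 1 when |N| ≥ 4. -/
namespace Lam

theorem lift_lift (M : Lam) : ∀ d e, d ≤ e → (M.lift e).lift d = (M.lift d).lift (e+1) := by
  induction M with
  | var n =>
    intro d e h
    simp only [lift]
    split_ifs <;> simp_all [lift] <;> first | rfl | omega | (split_ifs <;> first | rfl | omega)
  | lam M ih =>
    intro d e h
    simp only [lift, ih (d+1) (e+1) (by omega)]
  | app A B ihA ihB =>
    intro d e h
    simp only [lift, ihA d e h, ihB d e h]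

theorem lift_subst_ge (M : Lam) : ∀ N x d, x ≤ d →
    (M.subst x N).lift d = (M.lift (d+1)).subst x (N.lift d) := by
  induction M with
  | var n =>
    intro N x d h
    simp only [lift, subst]
    split_ifs <;> simp only [lift, subst] <;>
      first
        | rfl | omega | (exfalso; omega) | (simp only [Lam.var.injEq]; omega)
        | (split_ifs <;>
            first | rfl | omega | (exfalso; omega) | (simp only [Lam.var.injEq]; omega))
  | lam M ih =>
    intro N x d h
    simp only [lift, subst, ih (N.lift 0) (x+1) (d+1) (by omega),
      lift_lift N 0 d (by omega)]
  | app A B ihA ihB =>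
    intro N x d h
    simp only [lift, subst, ihA N x d h, ihB N x d h]

theorem lift_subst_le (M : Lam) : ∀ N x d, d ≤ x →
    (M.subst x N).lift d = (M.lift d).subst (x+1) (N.lift d) := by
  induction M with
  | var n =>
    intro N x d h
    simp only [lift, subst]
    split_ifs <;> simp only [lift, subst] <;>
      first
        | rfl | omega | (exfalso; omega) | (simp only [Lam.var.injEq]; omega)
        | (split_ifs <;>
            first | rfl | omega | (exfalso; omega) | (simp only [Lam.var.injEq]; omega))
  | lam M ih =>
    intro N x d h
    simp only [lift, subst, ih (N.lift 0) (x+1) (d+1) (by omega),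
      lift_lift N 0 d (by omega)]
  | app A B ihA ihB =>
    intro N x d h
    simp only [lift, subst, ihA N x d h, ihB N x d h]

theorem subst_lift_cancel (M : Lam) : ∀ N d, (M.lift d).subst d N = M := by
  induction M with
  | var n =>
    intro N d
    simp only [lift, subst]
    split_ifs <;> simp only [lift, subst] <;>
      first
        | rfl | omega | (exfalso; omega) | (simp only [Lam.var.injEq]; omega)
        | (split_ifs <;>
            first | rfl | omega | (exfalso; omega) | (simp only [Lam.var.injEq]; omega))
  | lam M ih => intro N d; simp only [lift, subst, ih]
  | app A B ihA ihB => intro N d; simp only [lift, subst, ihA, ihB]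

theorem subst_subst (M : Lam) : ∀ N P i j, i ≤ j →
    (M.subst i N).subst j P = (M.subst (j+1) (P.lift i)).subst i (N.subst j P) := by
  induction M with
  | var n =>
    intro N P i j h
    simp only [subst]
    split_ifs <;> simp only [lift, subst, subst_lift_cancel] <;>
      first
        | rfl | omega | (exfalso; omega) | (simp only [Lam.var.injEq]; omega)
        | (split_ifs <;>
            first | rfl | omega | (exfalso; omega) | (simp only [Lam.var.injEq]; omega))
  | lam M ih =>
    intro N P i j h
    simp only [subst, ih (N.lift 0) (P.lift 0) (i+1) (j+1) (by omega),
      lift_lift P 0 i (by omega), lift_subst_le N P j 0 (by omega)]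
  | app A B ihA ihB =>
    intro N P i j h
    simp only [subst, ihA N P i j h, ihB N P i j h]

/-- sized parallel reduction: the ℕ counts beta-nodes in the derivation -/
inductive Par : ℕ → Lam → Lam → Prop
  | var (n : ℕ) : Par 0 (var n) (var n)
  | lam {b M M'} : Par b M M' → Par b (lam M) (lam M')
  | app {b c M M' N N'} : Par b M M' → Par c N N' → Par (b+c) (app M N) (app M' N')
  | beta {b c M M' N N'} : Par b M M' → Par c N N' →
      Par (b+c+1) (app (lam M) N) (M'.subst 0 N')

theorem Par.refl (M : Lam) : Par 0 M M := by
  induction M with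
  | var n => exact Par.var n
  | lam M ih => exact Par.lam ih
  | app A B ihA ihB => exact Par.app ihA ihB

theorem Par.lift {b M M'} (h : Par b M M') : ∀ d, Par b (M.lift d) (M'.lift d) := by
  induction h with
  | var n => intro d; simp only [Lam.lift]; split_ifs <;> exact Par.refl _
  | lam _ ih => intro d; exact Par.lam (ih (d+1))
  | app _ _ ihA ihB => intro d; exact Par.app (ihA d) (ihB d)
  | beta _ _ ihA ihB =>
    intro d
    have := Par.beta (ihA (d+1)) (ihB d)
    simpa [Lam.lift, lift_subst_ge _ _ 0 d (by omega)] using this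

theorem Par.subst {b M M'} (h : Par b M M') :
    ∀ {c N N'} (_ : Par c N N') (x : ℕ), ∃ k, Par k (M.subst x N) (M'.subst x N') := by
  induction h with
  | var n =>
    intro c N N' hN x
    simp only [Lam.subst]
    split_ifs
    · exact ⟨c, hN⟩
    · exact ⟨0, Par.refl _⟩
    · exact ⟨0, Par.refl _⟩
  | lam _ ih =>
    intro c N N' hN x
    obtain ⟨k, hk⟩ := ih (hN.lift 0) (x+1)
    exact ⟨k, Par.lam hk⟩
  | app _ _ ihA ihB =>
    intro c N N' hN x
    obtain ⟨k1, h1⟩ := ihA hN x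
    obtain ⟨k2, h2⟩ := ihB hN x
    exact ⟨k1+k2, Par.app h1 h2⟩
  | @beta b c A A' B B' _ _ ihA ihB =>
    intro c' N N' hN x
    obtain ⟨k1, h1⟩ := ihA (hN.lift 0) (x+1)
    obtain ⟨k2, h2⟩ := ihB hN x
    refine ⟨k1+k2+1, ?_⟩
    have := Par.beta h1 h2
    rw [subst_subst A' B' N' 0 x (by omega)]
    simpa [Lam.subst] using this

theorem par_lam_inv {b M X} (h : Par b (Lam.lam M) X) :
    ∃ M', X = Lam.lam M' ∧ Par b M M' := by
  cases h with
  | lam h => exact ⟨_, rfl, h⟩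

theorem par_var_inv {b n X} (h : Par b (Lam.var n) X) : X = Lam.var n := by
  cases h; rfl

/-- triangle property -/
theorem Par.triangle {b M N} (h : Par b M N) : ∃ c, Par c N M.star := by
  induction h with
  | var n => exact ⟨0, Par.refl _⟩
  | lam _ ih =>
    obtain ⟨c, hc⟩ := ih
    exact ⟨c, by simpa [star] using Par.lam hc⟩
  | @app b c A A' B B' hA hB ihA ihB =>
    obtain ⟨c1, h1⟩ := ihA
    obtain ⟨c2, h2⟩ := ihB
    cases A with
    | var n =>
      rw [par_var_inv hA]
      exact ⟨c2, by simpa [star] using Par.app (Par.refl (Lam.var n)) h2⟩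
    | lam A0 =>
      obtain ⟨A0', rfl, hA0⟩ := par_lam_inv hA
      simp only [star] at h1 ⊢
      obtain ⟨S, hS, h1'⟩ := par_lam_inv h1
      obtain rfl : S = A0.star := by injection hS with h; exact h.symm
      exact ⟨c1 + c2 + 1, Par.beta h1' h2⟩
    | app A1 A2 =>
      exact ⟨c1 + c2, by simpa [star] using Par.app h1 h2⟩
  | @beta b c A A' B B' hA hB ihA ihB =>
    obtain ⟨c1, h1⟩ := ihA
    obtain ⟨c2, h2⟩ := ihB
    obtain ⟨k, hk⟩ := h1.subst h2 0
    exact ⟨k, by simpa [star] using hk⟩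

theorem Step.par {M N} (h : Step M N) : ∃ b, Par b M N := by
  induction h with
  | beta A B => exact ⟨1, by simpa using Par.beta (Par.refl A) (Par.refl B)⟩
  | appL N _ ih => obtain ⟨b, hb⟩ := ih; exact ⟨b, by simpa using Par.app hb (Par.refl N)⟩
  | appR M _ ih => obtain ⟨b, hb⟩ := ih; exact ⟨b, by simpa using Par.app (Par.refl M) hb⟩
  | abs _ ih => obtain ⟨b, hb⟩ := ih; exact ⟨b, Par.lam hb⟩

theorem Par.size_bound {b M N} (h : Par b M N) :
    2*b + 1 ≤ M.size ∧ (1 ≤ b → 2*b + 2 ≤ M.size) := by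
  induction h with
  | var n => simp [size]
  | lam _ ih => simp only [size]; omega
  | app _ _ ihA ihB => simp only [size]; omega
  | beta _ _ ihA ihB => simp only [size]; omega

theorem Steps.trans {a M P} (h : Steps a M P) : ∀ {b N}, Steps b P N → Steps (a+b) M N := by
  induction a generalizing M with
  | zero => intro b N h2; cases h; simpa using h2
  | succ a ih =>
    intro b N h2
    obtain ⟨Q, hQ, hQ2⟩ := h
    have : a + 1 + b = (a + b) + 1 := by omega
    rw [this]
    exact ⟨Q, hQ, ih hQ2 h2⟩

theorem Steps.appL {a M M'} (h : Steps a M M') (N : Lam) :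
    Steps a (app M N) (app M' N) := by
  induction a generalizing M with
  | zero => cases h; rfl
  | succ a ih => obtain ⟨Q, hQ, hQ2⟩ := h; exact ⟨app Q N, Step.appL N hQ, ih hQ2⟩

theorem Steps.appR (M : Lam) {a N N'} (h : Steps a N N') :
    Steps a (app M N) (app M N') := by
  induction a generalizing N with
  | zero => cases h; rfl
  | succ a ih => obtain ⟨Q, hQ, hQ2⟩ := h; exact ⟨app M Q, Step.appR M hQ, ih hQ2⟩

theorem Steps.abs {a M M'} (h : Steps a M M') : Steps a (lam M) (lam M') := by
  induction a generalizing M with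
  | zero => cases h; rfl
  | succ a ih => obtain ⟨Q, hQ, hQ2⟩ := h; exact ⟨lam Q, Step.abs hQ, ih hQ2⟩

theorem Par.steps {b M N} (h : Par b M N) : Steps b M N := by
  induction h with
  | var n => rfl
  | lam _ ih => exact ih.abs
  | app _ _ ihA ihB => exact (ihA.appL _).trans (Steps.appR _ ihB)
  | @beta b c A A' B B' _ _ ihA ihB =>
    have h1 : Steps c (Lam.app (Lam.lam A) B) (Lam.app (Lam.lam A) B') :=
      Steps.appR _ ihB
    have h2 : Steps b (Lam.app (Lam.lam A) B') (Lam.app (Lam.lam A') B') :=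
      Steps.appL (Steps.abs ihA) _
    have h3 : Steps 1 (Lam.app (Lam.lam A') B') (A'.subst 0 B') :=
      ⟨_, Step.beta A' B', rfl⟩
    have := (h1.trans h2).trans h3
    simpa [Nat.add_comm c b] using this

theorem Steps.red {a M N} (h : Steps a M N) : Red M N := by
  induction a generalizing M with
  | zero => cases h; exact Relation.ReflTransGen.refl
  | succ a ih =>
    obtain ⟨Q, hQ, hQ2⟩ := h
    exact Relation.ReflTransGen.head hQ (ih hQ2)

end Lam

/-- weak cofinal property: if M → N then N ↠ M*, within (1/2)|N| − 1 steps
when |N| ≥ 4 -/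
theorem weak_cofinal {M N : Lam} (h : Lam.Step M N) :
    Lam.Red N M.star ∧
      ∃ l : ℕ, Lam.Steps l N M.star ∧ (4 ≤ N.size → (l : ℚ) ≤ (N.size : ℚ) / 2 - 1) := by
  obtain ⟨b, hb⟩ := h.par
  obtain ⟨c, hc⟩ := hb.triangle
  refine ⟨hc.steps.red, c, hc.steps, fun h4 => ?_⟩
  have hbnd := hc.size_bound
  rcases Nat.eq_zero_or_pos c with rfl | hpos
  · have : (4:ℚ) ≤ (N.size : ℚ) := by exact_mod_cast h4
    push_cast
    linarith
  · have h2 : 2*c + 2 ≤ N.size := hbnd.2 hpos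
    have : (2*c + 2 : ℚ) ≤ (N.size : ℚ) := by exact_mod_cast h2
    linarith
end
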